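/- If H is a 6-partite intersecting hypergraph with 12 edges in which every part has at least 5 vertices incident to an edge and Δ(H) ≤ 3, then H is not intersecting (contradiction): the total number of pairwise intersections realizable is at most 60 < C(12,2) = 66. Formally: there is no 6-partite intersecting hypergraph with 12 edges, maximum degree at most 3, and covering number 5. -/
import Mathlib


def Intersecting {V : Type*} (E : Finset (Finset V)) : Prop :=
  ∀ e ∈ E, ∀ f ∈ E, ∃ v, v ∈ e ∧ v ∈ f

def IsCover {V : Type*} (E : Finset (Finset V)) (C : Finset V) : Prop :=
  ∀ e ∈ E, ∃ v ∈ C, v ∈ e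

noncomputable def coverNum {V : Type*} (E : Finset (Finset V)) : ℕ :=
  sInf {n | ∃ C : Finset V, IsCover E C ∧ C.card = n}

def Partite {V : Type*} (r : ℕ) (part : V → Fin r) (E : Finset (Finset V)) : Prop :=
  ∀ e ∈ E, ∀ i : Fin r, (e.filter (fun v => part v = i)).card = 1

open Classical in
noncomputable def deg {V : Type*} (E : Finset (Finset V)) (v : V) : ℕ :=
  (E.filter (fun e => v ∈ e)).card

open Classical in
theorem stmt8 :
    ¬ ∃ (V : Type) (part : V → Fin 6) (E : Finset (Finset V)),
      Partite 6 part E ∧ Intersecting E ∧ E.card = 12 ∧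
      (∀ v : V, deg E v ≤ 3) ∧ coverNum E = 5 := by
  rintro ⟨V, part, E, hPart, hInt, hcard, hdeg, hcov⟩
  classical
  -- the set of vertices of part i incident to some edge
  set S : Fin 6 → Finset V :=
    fun i => E.biUnion (fun e => e.filter (fun v => part v = i)) with hS
  have hSmem : ∀ i v, v ∈ S i ↔ ∃ e ∈ E, v ∈ e ∧ part v = i := by
    intro i v
    simp [hS, Finset.mem_biUnion, Finset.mem_filter, and_assoc]
  -- each S i is a cover, hence has card ≥ 5
  have hScov : ∀ i, IsCover E (S i) := by
    intro i e he
    have h1 := hPart e he i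
    obtain ⟨v, hv⟩ := Finset.card_eq_one.mp h1
    have hvmem : v ∈ e.filter (fun v => part v = i) := by
      rw [hv]; exact Finset.mem_singleton_self v
    rw [Finset.mem_filter] at hvmem
    exact ⟨v, (hSmem i v).mpr ⟨e, he, hvmem.1, hvmem.2⟩, hvmem.1⟩
  have hScard : ∀ i, 5 ≤ (S i).card := by
    intro i
    have hmem : (S i).card ∈ {n | ∃ C : Finset V, IsCover E C ∧ C.card = n} :=
      ⟨S i, hScov i, rfl⟩
    have h : coverNum E ≤ (S i).card := Nat.sInf_le hmem
    rw [hcov] at h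
    exact h
  -- degrees on S i : between 1 and 3, summing to 12
  have hdeg1 : ∀ i, ∀ v ∈ S i, 1 ≤ deg E v := by
    intro i v hv
    obtain ⟨e, he, hve, _⟩ := (hSmem i v).mp hv
    exact Finset.card_pos.mpr ⟨e, Finset.mem_filter.mpr ⟨he, hve⟩⟩
  have hdsum : ∀ i, ∑ v ∈ S i, deg E v = 12 := by
    intro i
    have : ∑ v ∈ S i, deg E v = ∑ v ∈ S i, ∑ e ∈ E, (if v ∈ e then 1 else 0) := by
      refine Finset.sum_congr rfl fun v _ => ?_
      rw [deg, Finset.card_filter]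
    rw [this, Finset.sum_comm]
    have : ∀ e ∈ E, (∑ v ∈ S i, if v ∈ e then 1 else 0) = 1 := by
      intro e he
      rw [← Finset.card_filter]
      have heq : (S i).filter (fun v => v ∈ e) = e.filter (fun v => part v = i) := by
        ext v
        simp only [Finset.mem_filter, hSmem]
        constructor
        · rintro ⟨⟨e', he', hve', hpi⟩, hve⟩; exact ⟨hve, hpi⟩
        · rintro ⟨hve, hpi⟩; exact ⟨⟨e, he, hve, hpi⟩, hve⟩
      rw [heq, hPart e he i]
    rw [Finset.sum_congr rfl this, Finset.sum_const, smul_eq_mul, mul_one, hcard]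
  -- pairs of distinct edges meeting in part i
  set P : Fin 6 → Finset (Finset V × Finset V) :=
    fun i => (E ×ˢ E).filter (fun p => p.1 ≠ p.2 ∧ ∃ v, part v = i ∧ v ∈ p.1 ∧ v ∈ p.2)
    with hP
  -- off-diagonal pairs at a single vertex
  have hfibcard : ∀ v : V,
      (((E.filter (fun e => v ∈ e)) ×ˢ (E.filter (fun e => v ∈ e))).filter
        (fun p => p.1 ≠ p.2)).card = deg E v * deg E v - deg E v := by
    intro v
    set s := E.filter (fun e => v ∈ e) with hs
    have hdiag : (s ×ˢ s).filter (fun p => p.1 = p.2) = s.image (fun x => (x, x)) := by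
      ext p
      simp only [Finset.mem_filter, Finset.mem_product, Finset.mem_image]
      constructor
      · rintro ⟨⟨h1, h2⟩, h3⟩; exact ⟨p.1, h1, by simp [Prod.ext_iff, h3]⟩
      · rintro ⟨x, hx, rfl⟩; exact ⟨⟨hx, hx⟩, rfl⟩
    have hdiagcard : ((s ×ˢ s).filter (fun p => p.1 = p.2)).card = s.card := by
      rw [hdiag, Finset.card_image_of_injective _ (fun a b h => (Prod.mk.inj h).1)]
    have htot := Finset.card_filter_add_card_filter_not
      (s := s ×ˢ s) (p := fun p => p.1 = p.2)
    rw [Finset.card_product, hdiagcard] at htot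
    have hd : deg E v = s.card := rfl
    simp only [ne_eq]
    rw [hd]
    omega
  -- bound on |P i|
  have hPbound : ∀ i, (P i).card ≤ 21 := by
    intro i
    have hsub : P i ⊆ (S i).biUnion (fun v =>
        ((E.filter (fun e => v ∈ e)) ×ˢ (E.filter (fun e => v ∈ e))).filter
          (fun p => p.1 ≠ p.2)) := by
      intro p hp
      rw [hP, Finset.mem_filter, Finset.mem_product] at hp
      obtain ⟨⟨h1, h2⟩, hne, v, hpi, hv1, hv2⟩ := hp
      refine Finset.mem_biUnion.mpr ⟨v, (hSmem i v).mpr ⟨p.1, h1, hv1, hpi⟩, ?_⟩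
      simp only [Finset.mem_filter, Finset.mem_product]
      exact ⟨⟨⟨h1, hv1⟩, ⟨h2, hv2⟩⟩, hne⟩
    calc (P i).card ≤ ∑ v ∈ S i, (((E.filter (fun e => v ∈ e)) ×ˢ
            (E.filter (fun e => v ∈ e))).filter (fun p => p.1 ≠ p.2)).card :=
          le_trans (Finset.card_le_card hsub) (Finset.card_biUnion_le)
      _ = ∑ v ∈ S i, (deg E v * deg E v - deg E v) :=
          Finset.sum_congr rfl (fun v _ => hfibcard v)
      _ ≤ 21 := by
          have key : ∑ v ∈ S i, (deg E v * deg E v - deg E v) + 3 * (S i).card ≤ 36 := by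
            have : ∑ v ∈ S i, (deg E v * deg E v - deg E v) + 3 * (S i).card
                = ∑ v ∈ S i, ((deg E v * deg E v - deg E v) + 3) := by
              rw [Finset.sum_add_distrib, Finset.sum_const, smul_eq_mul, mul_comm]
            rw [this]
            calc ∑ v ∈ S i, ((deg E v * deg E v - deg E v) + 3)
                ≤ ∑ v ∈ S i, 3 * deg E v := by
                  refine Finset.sum_le_sum fun v hv => ?_
                  have h1 := hdeg1 i v hv
                  have h3 := hdeg v
                  interval_cases (deg E v) <;> norm_num
              _ = 3 * 12 := by rw [← Finset.mul_sum, hdsum i]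
              _ ≤ 36 := by norm_num
          have := hScard i
          omega
  -- all 132 ordered pairs of distinct edges lie in some P i
  set D : Finset (Finset V × Finset V) := (E ×ˢ E).filter (fun p => p.1 ≠ p.2) with hD
  have hDcard : D.card = 132 := by
    have hdiag : (E ×ˢ E).filter (fun p : Finset V × Finset V => p.1 = p.2)
        = E.image (fun x => (x, x)) := by
      ext p
      simp only [Finset.mem_filter, Finset.mem_product, Finset.mem_image]
      constructor
      · rintro ⟨⟨h1, h2⟩, h3⟩; exact ⟨p.1, h1, by simp [Prod.ext_iff, h3]⟩
      · rintro ⟨x, hx, rfl⟩; exact ⟨⟨hx, hx⟩, rfl⟩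
    have hdiagcard : ((E ×ˢ E).filter (fun p : Finset V × Finset V => p.1 = p.2)).card
        = E.card := by
      rw [hdiag, Finset.card_image_of_injective _ (fun a b h => (Prod.mk.inj h).1)]
    have htot := Finset.card_filter_add_card_filter_not
      (s := E ×ˢ E) (p := fun p : Finset V × Finset V => p.1 = p.2)
    rw [Finset.card_product, hdiagcard, hcard] at htot
    have hDe : D.card = ((E ×ˢ E).filter
        (fun p : Finset V × Finset V => ¬ p.1 = p.2)).card := by
      rw [hD]
    omega
  have hDsub : D ⊆ (Finset.univ : Finset (Fin 6)).biUnion P := by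
    intro p hp
    rw [hD, Finset.mem_filter, Finset.mem_product] at hp
    obtain ⟨⟨h1, h2⟩, hne⟩ := hp
    obtain ⟨v, hv1, hv2⟩ := hInt p.1 h1 p.2 h2
    refine Finset.mem_biUnion.mpr ⟨part v, Finset.mem_univ _, ?_⟩
    rw [hP, Finset.mem_filter, Finset.mem_product]
    exact ⟨⟨h1, h2⟩, hne, v, rfl, hv1, hv2⟩
  have hfinal : D.card ≤ 126 := by
    calc D.card ≤ ∑ i : Fin 6, (P i).card :=
          le_trans (Finset.card_le_card hDsub) (Finset.card_biUnion_le)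
      _ ≤ ∑ _i : Fin 6, 21 := Finset.sum_le_sum fun i _ => hPbound i
      _ = 126 := by simp
  omega
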